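/- Let G be a finite simple graph with minimum degree δ(G) ≥ 2 and let U be its Grover transition matrix. Then the positive support of the transpose of U equals the edge matrix: (Uᵀ)⁺ = B − J₀. Equivalently, U⁺ = Bᵀ − J₀. -/

import Mathlib

open Matrix SimpleGraph

variable {V : Type*} [Fintype V] [DecidableEq V]

/-- The Grover transition matrix `U` of a graph `G`, indexed by darts (arcs):
`U e f = 2/deg(t(f)) - 1` if `f = e⁻¹`, `U e f = 2/deg(t(f))` if `t(f) = o(e)` and
`f ≠ e⁻¹`, and `0` otherwise.  (When `t(f) = o(e)` we have `deg (t f) = deg (o e)`.) -/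
noncomputable def grover (G : SimpleGraph V) [DecidableRel G.Adj] :
    Matrix G.Dart G.Dart ℝ := fun e f =>
  if f = e.symm then 2 / (G.degree e.toProd.1) - 1
  else if f.toProd.2 = e.toProd.1 then 2 / (G.degree e.toProd.1) else 0

/-- The positive support of a real square matrix. -/
noncomputable def posSupp {α : Type*} (M : Matrix α α ℝ) : Matrix α α ℝ :=
  fun i j => if 0 < M i j then 1 else 0

/-- The matrix `B` with `B e f = 1` iff `t(e) = o(f)`. -/
def Bmat (G : SimpleGraph V) [DecidableRel G.Adj] : Matrix G.Dart G.Dart ℝ :=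
  fun e f => if e.toProd.2 = f.toProd.1 then 1 else 0

/-- The arc-inversion matrix `J₀` with `(J₀) e f = 1` iff `f = e⁻¹`. -/
def J0 (G : SimpleGraph V) [DecidableRel G.Adj] : Matrix G.Dart G.Dart ℝ :=
  fun e f => if f = e.symm then 1 else 0

/-- The diagonal degree matrix of `G`. -/
noncomputable def degMat (G : SimpleGraph V) [DecidableRel G.Adj] : Matrix V V ℝ :=
  Matrix.diagonal fun v => (G.degree v : ℝ)

/-- Ren–Aleksic–Emms–Wilson–Hancock: if `δ(G) ≥ 2` then
`(Uᵀ)⁺ = B - J₀`, equivalently `U⁺ = Bᵀ - J₀`. -/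
theorem posSupp_transpose_grover_eq_edge_matrix (G : SimpleGraph V) [DecidableRel G.Adj]
    (hδ : ∀ v : V, 2 ≤ G.degree v) :
    posSupp ((grover G)ᵀ) = Bmat G - J0 G ∧
      posSupp (grover G) = (Bmat G)ᵀ - J0 G := by
  have key : ∀ (d : ℕ), 2 ≤ d → ¬ (0 < 2 / (d:ℝ) - 1) := by
    intro d hd
    rw [not_lt, sub_nonpos, div_le_one (by positivity)]
    exact_mod_cast hd
  have pos : ∀ (d : ℕ), 2 ≤ d → 0 < 2 / (d:ℝ) := by
    intro d hd
    have : (0:ℝ) < d := by exact_mod_cast Nat.lt_of_lt_of_le Nat.zero_lt_two hd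
    positivity
  constructor
  · ext e f
    simp only [posSupp, transpose_apply, grover, Bmat, J0, Matrix.sub_apply]
    by_cases h1 : e = f.symm
    · have h2 : f = e.symm := by rw [h1, SimpleGraph.Dart.symm_symm]
      have h3 : e.toProd.2 = f.toProd.1 := by rw [h1]; rfl
      simp only [if_pos h1, if_pos h3, if_pos h2, if_neg (key _ (hδ _))]
      norm_num
    · have h2 : f ≠ e.symm := fun h => h1 (by rw [h, SimpleGraph.Dart.symm_symm])
      by_cases h3 : e.toProd.2 = f.toProd.1
      · simp [h1, h2, h3, pos _ (hδ _)]
      · simp [h1, h2, h3]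
  · ext e f
    simp only [posSupp, grover, Bmat, J0, transpose_apply, Matrix.sub_apply]
    by_cases h1 : f = e.symm
    · have h3 : f.toProd.2 = e.toProd.1 := by rw [h1]; rfl
      simp [h1, h3, key _ (hδ _)]
    · by_cases h3 : f.toProd.2 = e.toProd.1
      · simp [h1, h3, pos _ (hδ _)]
      · simp [h1, h3]
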